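/- arXiv:2206.05969 — 2 statements merged into one kernel-verified Lean document; each statement's English description precedes it below -/
import Mathlib

section
/- Let q, U, Q be commuting indeterminates and let l be a positive integer. Define φ_r(x) = ∏_{i=1}^r (1 − x^i) with φ_0(x) = 1. Then in the ring of formal Laurent polynomials, ∏_{i=1}^l (1 − U^{-1} Q q^{-i+1}) · U^l = ∑_{m=0}^l (φ_l(q^{-1}) / (φ_{l−m}(q^{-1}) φ_m(q^{-1}))) · ∏_{i=1}^{l−m} (1 − Q q^{-i+1}) · ∏_{i=1}^m (1 − U q^{i−1}) · (−1)^m q^{(m − m²)/2}. -/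
private lemma q_binomial_pascal_aux {F : Type*} [Field F] (p x y fd fi u g : F)
    (hx : x ≠ 0) (hy : y ≠ 0) (hfd : fd ≠ 0) (hfi : fi ≠ 0) (hg : g = u * fd + fi) :
    p * g / (x * fd * (y * fi)) = u * (p / (x * (y * fi))) + p / (x * fd * y) := by
  subst hg
  field_simp

/-- The q-binomial type identity (Lemma 5.13 of [KK15]):
`∏_{i=1}^l (1 - U⁻¹ Q q^{-i+1}) U^l
  = ∑_{m=0}^l (φ_l(q⁻¹)/(φ_{l-m}(q⁻¹) φ_m(q⁻¹))) ∏_{i=1}^{l-m}(1 - Q q^{-i+1})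
      ∏_{i=1}^m (1 - U q^{i-1}) (-1)^m q^{(m-m²)/2}`,
where `φ_r(x) = ∏_{i=1}^r (1 - x^i)`. (Note `m - m²` is always even.) -/
theorem q_binomial_identity (F : Type*) [Field F] (q U Q : F) (hq : q ≠ 0) (hU : U ≠ 0)
    (l : ℕ) (hl : 1 ≤ l)
    (φ : ℕ → F) (hφ : ∀ r : ℕ, φ r = ∏ i ∈ Finset.range r, (1 - (q⁻¹) ^ (i + 1)))
    (hφne : ∀ m : ℕ, m ≤ l → φ m ≠ 0) :
    (∏ i ∈ Finset.range l, (1 - U⁻¹ * Q * q ^ (-(i : ℤ)))) * U ^ l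
      = ∑ m ∈ Finset.range (l + 1),
          φ l / (φ (l - m) * φ m)
            * (∏ i ∈ Finset.range (l - m), (1 - Q * q ^ (-(i : ℤ))))
            * (∏ i ∈ Finset.range m, (1 - U * q ^ (i : ℤ)))
            * (-1) ^ m * q ^ (((m : ℤ) - (m : ℤ) ^ 2) / 2) := by
  classical
  have ht0 : (q⁻¹) ≠ 0 := inv_ne_zero hq
  have hφ0 : φ 0 = 1 := by rw [hφ]; simp
  have hφsucc : ∀ r : ℕ, φ (r + 1) = φ r * (1 - (q⁻¹) ^ (r + 1)) := by
    intro r; rw [hφ, hφ, Finset.prod_range_succ]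
  set A : ℕ → F := fun k => ∏ i ∈ Finset.range k, (1 - Q * q ^ (-(i : ℤ))) with hA
  set B : ℕ → F := fun m => ∏ i ∈ Finset.range m, (1 - U * q ^ (i : ℤ)) with hB
  set s : ℕ → F := fun m => (-1 : F) ^ m * q ^ (((m : ℤ) - (m : ℤ) ^ 2) / 2) with hs
  set c : ℕ → ℕ → F := fun n m => φ n / (φ (n - m) * φ m) with hc
  have hqm : ∀ m : ℕ, (q⁻¹) ^ m = q ^ (-(m : ℤ)) := by
    intro m; rw [inv_pow, ← zpow_natCast, ← zpow_neg]
  have hc0 : ∀ r : ℕ, φ r ≠ 0 → c r 0 = 1 := by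
    intro r hr
    simp only [hc, Nat.sub_zero, hφ0, mul_one]
    exact div_self hr
  have hcd : ∀ r : ℕ, φ r ≠ 0 → c r r = 1 := by
    intro r hr
    simp only [hc, Nat.sub_self, hφ0, one_mul]
    exact div_self hr
  have hsucc : ∀ m : ℕ, s (m + 1) = s m * (-1) * q ^ (-(m : ℤ)) := by
    intro m
    have hev : (2 : ℤ) ∣ (m : ℤ) ^ 2 - m := by
      have h := Int.even_mul_succ_self ((m : ℤ) - 1)
      have h2 : ((m : ℤ) - 1) * (((m : ℤ) - 1) + 1) = (m : ℤ) ^ 2 - m := by ring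
      exact (h2 ▸ h).two_dvd
    obtain ⟨k, hk⟩ := hev
    have hm2 : (m : ℤ) ^ 2 = m + 2 * k := by linarith
    have hexp : ((((m + 1 : ℕ)) : ℤ) - (((m + 1 : ℕ)) : ℤ) ^ 2) / 2
        = ((m : ℤ) - (m : ℤ) ^ 2) / 2 + (-(m : ℤ)) := by
      push_cast
      have e1 : ((m : ℤ) + 1) - ((m : ℤ) + 1) ^ 2 = -2 * m - 2 * k := by linear_combination -hm2
      have e2 : (m : ℤ) - (m : ℤ) ^ 2 = -(2 * k) := by linear_combination -hm2
      rw [e1, e2]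
      omega
    have h1 : s (m + 1) = (-1 : F) ^ (m + 1) * q ^ (((m : ℤ) - (m : ℤ) ^ 2) / 2 + (-(m : ℤ))) := by
      simp only [hs]
      rw [hexp]
    rw [h1, zpow_add₀ hq, pow_succ]
    simp only [hs]
    ring
  have key : ∀ n : ℕ, (∀ m ≤ n, φ m ≠ 0) →
      (∏ i ∈ Finset.range n, (U - Q * q ^ (-(i : ℤ))))
        = ∑ m ∈ Finset.range (n + 1), c n m * A (n - m) * B m * s m := by
    intro n
    induction n with
    | zero =>
        intro _
        simp [hc, hA, hB, hs, hφ0]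
    | succ n ih =>
        intro hne
        have hne' : ∀ m ≤ n, φ m ≠ 0 := fun m hm => hne m (le_trans hm (Nat.le_succ n))
        have hφn : φ n ≠ 0 := hne' n le_rfl
        have hφn1 : φ (n + 1) ≠ 0 := hne (n + 1) le_rfl
        rw [Finset.prod_range_succ, ih hne', Finset.sum_mul]
        have step : ∀ m ∈ Finset.range (n + 1),
            c n m * A (n - m) * B m * s m * (U - Q * q ^ (-(n : ℤ)))
              = ((q⁻¹) ^ m * c n m * A (n + 1 - m) * B m * s m
                + c n m * A (n - m) * B (m + 1) * s (m + 1)) := by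
          intro m hm
          have hmn : m ≤ n := Nat.lt_succ_iff.mp (Finset.mem_range.mp hm)
          obtain ⟨e, he⟩ : ∃ e, n = m + e := ⟨n - m, by omega⟩
          subst he
          have h1 : m + e - m = e := by omega
          have h2 : m + e + 1 - m = e + 1 := by omega
          rw [h1, h2]
          have hAe : A (e + 1) = A e * (1 - Q * q ^ (-(e : ℤ))) := by
            simp only [hA]; rw [Finset.prod_range_succ]
          have hBm : B (m + 1) = B m * (1 - U * q ^ ((m : ℕ) : ℤ)) := by
            simp only [hB]; rw [Finset.prod_range_succ]
          rw [hAe, hBm, hsucc, hqm]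
          have hz2 : q ^ (-(m : ℤ)) * q ^ (-(e : ℤ)) = q ^ (-((m + e : ℕ) : ℤ)) := by
            rw [← zpow_add₀ hq]
            congr 1
            push_cast
            ring
          have hz3 : q ^ ((m : ℕ) : ℤ) * q ^ (-(m : ℤ)) = 1 := by
            rw [← zpow_add₀ hq]; simp
          linear_combination (c (m + e) m * A e * B m * s m) *
            (Q * hz2 - U * hz3)
        rw [Finset.sum_congr rfl step, Finset.sum_add_distrib]
        rw [Finset.sum_range_succ (f := fun m => c (n + 1) m * A (n + 1 - m) * B m * s m),
          Finset.sum_range_succ' (f := fun m => c (n + 1) m * A (n + 1 - m) * B m * s m),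
          Finset.sum_range_succ' (f := fun m => (q⁻¹) ^ m * c n m * A (n + 1 - m) * B m * s m),
          Finset.sum_range_succ (f := fun m => c n m * A (n - m) * B (m + 1) * s (m + 1))]
        have pascal : ∀ i < n, c (n + 1) (i + 1) = (q⁻¹) ^ (i + 1) * c n (i + 1) + c n i := by
          intro i hi
          obtain ⟨d, hd⟩ : ∃ d, n = i + 1 + d := ⟨n - (i + 1), by omega⟩
          subst hd
          have e1 : i + 1 + d + 1 - (i + 1) = d + 1 := by omega
          have e2 : i + 1 + d - (i + 1) = d := by omega
          have e3 : i + 1 + d - i = d + 1 := by omega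
          have hφd1 : φ (d + 1) ≠ 0 := hne' (d + 1) (by omega)
          have hφd : φ d ≠ 0 := hne' d (by omega)
          have hφi1 : φ (i + 1) ≠ 0 := hne' (i + 1) (by omega)
          have hφi : φ i ≠ 0 := hne' i (by omega)
          have hfd : (1 - (q⁻¹) ^ (d + 1)) ≠ 0 := by
            intro h0
            apply hφd1
            rw [hφsucc d, h0, mul_zero]
          have hfi : (1 - (q⁻¹) ^ (i + 1)) ≠ 0 := by
            intro h0
            apply hφi1
            rw [hφsucc i, h0, mul_zero]
          simp only [hc, e1, e2, e3]
          rw [hφsucc (i + 1 + d), hφsucc d, hφsucc i]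
          exact q_binomial_pascal_aux (φ (i + 1 + d)) (φ d) (φ i) _ _ ((q⁻¹) ^ (i + 1)) _
            hφd hφi hfd hfi (by ring)
        have hmid : ∀ i ∈ Finset.range n,
            c (n + 1) (i + 1) * A (n + 1 - (i + 1)) * B (i + 1) * s (i + 1)
              = (q⁻¹) ^ (i + 1) * c n (i + 1) * A (n + 1 - (i + 1)) * B (i + 1) * s (i + 1)
                + c n i * A (n - i) * B (i + 1) * s (i + 1) := by
          intro i hi
          rw [pascal i (Finset.mem_range.mp hi),
            show n + 1 - (i + 1) = n - i from by omega]
          ring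
        rw [Finset.sum_congr rfl hmid, Finset.sum_add_distrib]
        rw [hc0 (n + 1) hφn1, hc0 n hφn, hcd (n + 1) hφn1, hcd n hφn, Nat.sub_self,
          Nat.sub_self]
        ring
  have hU' : U ^ l = ∏ _i ∈ Finset.range l, U := by
    rw [Finset.prod_const, Finset.card_range]
  have hLHS : (∏ i ∈ Finset.range l, (1 - U⁻¹ * Q * q ^ (-(i : ℤ)))) * U ^ l
      = ∏ i ∈ Finset.range l, (U - Q * q ^ (-(i : ℤ))) := by
    rw [hU', ← Finset.prod_mul_distrib]
    refine Finset.prod_congr rfl fun i _ => ?_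
    field_simp
  rw [hLHS, key l hφne]
  refine Finset.sum_congr rfl fun m hm => ?_
  simp only [hc, hA, hB, hs]
  ring
end

section
/- The function δ(s) = ∏_{i=1}^{N} Γ(s − c + (n − i + 2)/2) / Γ(s − c + i/2 + 1/2), where c = (k₁+k₂)/2, n is an even positive integer, and N = n/2 if n ≡ 0 mod 4 and N = n/2 − 1 if n ≡ 2 mod 4, satisfies the symmetry δ(k₁ + k₂ − (n+1)/2 − s) = δ(s) as meromorphic functions of s, for any fixed real numbers k₁, k₂. -/
open Complex

private lemma sin_add_nat_mul_pi (x : ℂ) (m : ℕ) :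
    Complex.sin (x + (m : ℂ) * (Real.pi : ℂ)) = (-1) ^ m * Complex.sin x := by
  induction m with
  | zero => simp
  | succ k ih =>
    have h : x + ((k + 1 : ℕ) : ℂ) * (Real.pi : ℂ)
        = (x + (k : ℂ) * (Real.pi : ℂ)) + (Real.pi : ℂ) := by push_cast; ring
    rw [h, Complex.sin_add_pi, ih, pow_succ]
    ring

private lemma sin_pi_mul_ne_zero' {x : ℂ} (h1 : ∀ m : ℕ, x ≠ -(m : ℂ))
    (h2 : ∀ m : ℕ, 1 - x ≠ -(m : ℂ)) :
    Complex.sin ((Real.pi : ℂ) * x) ≠ 0 := by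
  intro h
  rw [Complex.sin_eq_zero_iff] at h
  obtain ⟨k, hk⟩ := h
  have hπ : (Real.pi : ℂ) ≠ 0 := Complex.ofReal_ne_zero.mpr Real.pi_ne_zero
  have hx : x = (k : ℂ) := by
    apply mul_left_cancel₀ hπ
    rw [hk]; ring
  rcases le_or_gt k 0 with hk0 | hk0
  · refine h1 (-k).toNat ?_
    rw [hx]
    have h' : (((-k).toNat : ℤ) : ℂ) = ((-k : ℤ) : ℂ) := by
      rw [Int.toNat_of_nonneg (by omega : (0:ℤ) ≤ -k)]
    push_cast at h'
    rw [h']; ring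
  · refine h2 (k - 1).toNat ?_
    rw [hx]
    have h' : (((k - 1).toNat : ℤ) : ℂ) = ((k - 1 : ℤ) : ℂ) := by
      rw [Int.toNat_of_nonneg (by omega : (0:ℤ) ≤ k - 1)]
    push_cast at h'
    rw [h']; ring

private lemma gamma_reflect_ratio (v w : ℂ) (hv : Complex.Gamma v ≠ 0)
    (hw : Complex.Gamma w ≠ 0) (hsv : Complex.sin ((Real.pi : ℂ) * v) ≠ 0)
    (hsw : Complex.sin ((Real.pi : ℂ) * w) ≠ 0) :
    Complex.Gamma (1 - w) / Complex.Gamma (1 - v)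
      = Complex.Gamma v / Complex.Gamma w
        * (Complex.sin ((Real.pi : ℂ) * v) / Complex.sin ((Real.pi : ℂ) * w)) := by
  have hπ : (Real.pi : ℂ) ≠ 0 := Complex.ofReal_ne_zero.mpr Real.pi_ne_zero
  have e1 : Complex.Gamma (1 - w) = (Real.pi : ℂ) / Complex.sin ((Real.pi : ℂ) * w)
      / Complex.Gamma w := by
    rw [eq_div_iff hw, mul_comm]
    exact Complex.Gamma_mul_Gamma_one_sub w
  have e2 : Complex.Gamma (1 - v) = (Real.pi : ℂ) / Complex.sin ((Real.pi : ℂ) * v)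
      / Complex.Gamma v := by
    rw [eq_div_iff hv, mul_comm]
    exact Complex.Gamma_mul_Gamma_one_sub v
  rw [e1, e2]
  field_simp

/-- Symmetry of the gamma factor `δ_n(s)` under `s ↦ k₁ + k₂ - (n+1)/2 - s`,
away from the poles of the gamma functions involved. -/
theorem gamma_factor_symmetry (n : ℕ) (hn : Even n) (hpos : 0 < n) (k₁ k₂ : ℝ)
    (N : ℕ) (hN : N = if n % 4 = 0 then n / 2 else n / 2 - 1)
    (d : ℂ → ℂ)
    (hd : ∀ s : ℂ, d s = ∏ i ∈ Finset.Icc 1 N,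
      Complex.Gamma (s - ((k₁ : ℂ) + (k₂ : ℂ)) / 2 + ((n : ℂ) - (i : ℂ) + 2) / 2) /
        Complex.Gamma (s - ((k₁ : ℂ) + (k₂ : ℂ)) / 2 + (i : ℂ) / 2 + 1 / 2))
    (s : ℂ)
    (hreg : ∀ i ∈ Finset.Icc 1 N, ∀ m : ℕ,
      (s - ((k₁ : ℂ) + (k₂ : ℂ)) / 2 + ((n : ℂ) - (i : ℂ) + 2) / 2 ≠ -(m : ℂ)) ∧
      (s - ((k₁ : ℂ) + (k₂ : ℂ)) / 2 + (i : ℂ) / 2 + 1 / 2 ≠ -(m : ℂ)) ∧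
      (((k₁ : ℂ) + (k₂ : ℂ) - ((n : ℂ) + 1) / 2 - s) - ((k₁ : ℂ) + (k₂ : ℂ)) / 2
          + ((n : ℂ) - (i : ℂ) + 2) / 2 ≠ -(m : ℂ)) ∧
      (((k₁ : ℂ) + (k₂ : ℂ) - ((n : ℂ) + 1) / 2 - s) - ((k₁ : ℂ) + (k₂ : ℂ)) / 2
          + (i : ℂ) / 2 + 1 / 2 ≠ -(m : ℂ))) :
    d ((k₁ : ℂ) + (k₂ : ℂ) - ((n : ℂ) + 1) / 2 - s) = d s := by
  classical
  -- notation
  set c : ℂ := ((k₁ : ℂ) + (k₂ : ℂ)) / 2 with hc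
  set s' : ℂ := (k₁ : ℂ) + (k₂ : ℂ) - ((n : ℂ) + 1) / 2 - s with hs'
  set v : ℕ → ℂ := fun i => s - c + ((n : ℂ) - (i : ℂ) + 2) / 2 with hv
  set w : ℕ → ℂ := fun i => s - c + (i : ℂ) / 2 + 1 / 2 with hw
  -- arithmetic on the index bounds
  set m : ℕ := (n - N) / 2 with hm
  have hn2 : n % 2 = 0 := Nat.even_iff.mp hn
  have hkey : N % 2 = 0 ∧ n = N + 2 * m := by
    by_cases h4 : n % 4 = 0 <;> simp only [hN, h4, if_true, if_false] at hm ⊢ <;> omega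
  have hNeven : Even N := Nat.even_iff.mpr hkey.1
  have hnm : (n : ℂ) = (N : ℂ) + 2 * (m : ℂ) := by exact_mod_cast congrArg (Nat.cast : ℕ → ℂ) hkey.2
  -- nonvanishing facts
  have hGv : ∀ i ∈ Finset.Icc 1 N, Complex.Gamma (v i) ≠ 0 := fun i hi =>
    Complex.Gamma_ne_zero (fun k => (hreg i hi k).1)
  have hGw : ∀ i ∈ Finset.Icc 1 N, Complex.Gamma (w i) ≠ 0 := fun i hi =>
    Complex.Gamma_ne_zero (fun k => (hreg i hi k).2.1)
  have hA : ∀ i : ℕ, s' - c + ((n : ℂ) - (i : ℂ) + 2) / 2 = 1 - w i := by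
    intro i; rw [hs', hc, hw]; ring
  have hB : ∀ i : ℕ, s' - c + (i : ℂ) / 2 + 1 / 2 = 1 - v i := by
    intro i; rw [hs', hc, hv]; ring
  have hsv : ∀ i ∈ Finset.Icc 1 N, Complex.sin ((Real.pi : ℂ) * v i) ≠ 0 := by
    intro i hi
    refine sin_pi_mul_ne_zero' (fun k => (hreg i hi k).1) (fun k => ?_)
    rw [← hB i]
    exact (hreg i hi k).2.2.2
  have hsw : ∀ i ∈ Finset.Icc 1 N, Complex.sin ((Real.pi : ℂ) * w i) ≠ 0 := by
    intro i hi
    refine sin_pi_mul_ne_zero' (fun k => (hreg i hi k).2.1) (fun k => ?_)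
    rw [← hA i]
    exact (hreg i hi k).2.2.1
  rw [hd, hd]
  have step1 : (∏ i ∈ Finset.Icc 1 N,
      Complex.Gamma (s' - c + ((n : ℂ) - (i : ℂ) + 2) / 2) /
        Complex.Gamma (s' - c + (i : ℂ) / 2 + 1 / 2))
      = ∏ i ∈ Finset.Icc 1 N, (Complex.Gamma (v i) / Complex.Gamma (w i)
          * (Complex.sin ((Real.pi : ℂ) * v i) / Complex.sin ((Real.pi : ℂ) * w i))) := by
    refine Finset.prod_congr rfl fun i hi => ?_
    rw [hA i, hB i]
    exact gamma_reflect_ratio (v i) (w i) (hGv i hi) (hGw i hi) (hsv i hi) (hsw i hi)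
  rw [step1, Finset.prod_mul_distrib]
  -- the product of sine ratios is 1
  have hsineq : (∏ i ∈ Finset.Icc 1 N, Complex.sin ((Real.pi : ℂ) * v i))
      = ∏ i ∈ Finset.Icc 1 N, Complex.sin ((Real.pi : ℂ) * w i) := by
    have hterm : ∀ i ∈ Finset.Icc 1 N,
        Complex.sin ((Real.pi : ℂ) * v i)
          = (-1) ^ m * Complex.sin ((Real.pi : ℂ) * w (N + 1 - i)) := by
      intro i hi
      simp only [Finset.mem_Icc] at hi
      have hcast : ((N + 1 - i : ℕ) : ℂ) = (N : ℂ) + 1 - (i : ℂ) := by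
        have h1 : i ≤ N + 1 := by omega
        push_cast [Nat.cast_sub h1]
        ring
      have harg : (Real.pi : ℂ) * v i
          = (Real.pi : ℂ) * w (N + 1 - i) + (m : ℂ) * (Real.pi : ℂ) := by
        show (Real.pi : ℂ) * (s - c + ((n : ℂ) - (i : ℂ) + 2) / 2)
          = (Real.pi : ℂ) * (s - c + ((N + 1 - i : ℕ) : ℂ) / 2 + 1 / 2)
            + (m : ℂ) * (Real.pi : ℂ)
        rw [hcast, hnm]; ring
      rw [harg, sin_add_nat_mul_pi]
    rw [Finset.prod_congr rfl hterm, Finset.prod_mul_distrib, Finset.prod_const,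
      Nat.card_Icc]
    have hre : (∏ i ∈ Finset.Icc 1 N, Complex.sin ((Real.pi : ℂ) * w (N + 1 - i)))
        = ∏ i ∈ Finset.Icc 1 N, Complex.sin ((Real.pi : ℂ) * w i) := by
      refine Finset.prod_nbij' (fun i => N + 1 - i) (fun i => N + 1 - i) ?_ ?_ ?_ ?_ ?_
      · intro a ha; simp only [Finset.mem_Icc] at ha ⊢; omega
      · intro a ha; simp only [Finset.mem_Icc] at ha ⊢; omega
      · intro a ha; simp only [Finset.mem_Icc] at ha
        show N + 1 - (N + 1 - a) = a; omega
      · intro a ha; simp only [Finset.mem_Icc] at ha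
        show N + 1 - (N + 1 - a) = a; omega
      · intro a ha; rfl
    rw [hre]
    have hpow : ((-1 : ℂ) ^ m) ^ (N + 1 - 1) = 1 := by
      rw [Nat.add_sub_cancel, ← pow_mul]
      exact Even.neg_one_pow (hNeven.mul_left m)
    rw [hpow, one_mul]
  have h1 : (∏ x ∈ Finset.Icc 1 N,
      Complex.sin ((Real.pi : ℂ) * v x) / Complex.sin ((Real.pi : ℂ) * w x)) = 1 := by
    rw [Finset.prod_div_distrib, hsineq, div_self (Finset.prod_ne_zero_iff.mpr hsw)]
  rw [h1, mul_one]
end
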